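/- arXiv:1605.07493 — 3 statements merged into one kernel-verified Lean document; each statement's English description precedes it below -/
import Mathlib

section
/- Suppose the initial distance d₀ between the lead and ego vehicle satisfies d₀ ≥ D, where D is defined as follows: if a_e > a_l and ε* := (v_e − v_l + a_e·φ)/(a_e − a_l) lies in the interval [φ, min(t_f^e, t_f^l)), then D = max(0, v_e·φ + v_e²/(2a_e) − v_l²/(2a_l), J(ε*)); otherwise D = max(0, v_e·φ + v_e²/(2a_e) − v_l²/(2a_l)). Then for every ε ≥ 0 the inter-vehicle distance remains nonnegative: d₀ − J(ε) ≥ 0, i.e. the ego vehicle never collides with the lead vehicle during the emergency braking maneuver. -/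
open intervalIntegral

lemma ramp_cont (v a : ℝ) : Continuous fun τ : ℝ => max (v - a * τ) 0 := by fun_prop

lemma ramp_eval_le (v a ε : ℝ) (ha : 0 < a) (hε : 0 ≤ ε) (h : a * ε ≤ v) :
    ∫ τ in (0:ℝ)..ε, max (v - a * τ) 0 = v * ε - a * ε ^ 2 / 2 := by
  have h1 : Set.EqOn (fun τ : ℝ => max (v - a * τ) 0) (fun τ => v - a * τ) (Set.uIcc (0:ℝ) ε) := by
    intro τ hτ
    rw [Set.uIcc_of_le hε] at hτ
    have : a * τ ≤ a * ε := mul_le_mul_of_nonneg_left hτ.2 ha.le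
    exact max_eq_left (by linarith)
  rw [intervalIntegral.integral_congr h1,
    intervalIntegral.integral_sub (f := fun _ => v) (g := fun τ => a * τ)
      intervalIntegrable_const ((Continuous.mul continuous_const continuous_id').intervalIntegrable _ _)]
  rw [intervalIntegral.integral_const_mul]
  simp [integral_id]
  ring

lemma ramp_eval_ge (v a ε : ℝ) (ha : 0 < a) (hv : 0 ≤ v) (h : v / a ≤ ε) :
    ∫ τ in (0:ℝ)..ε, max (v - a * τ) 0 = v ^ 2 / (2 * a) := by
  have h0 : 0 ≤ v / a := div_nonneg hv ha.le
  have hint : ∀ x y : ℝ, IntervalIntegrable (fun τ : ℝ => max (v - a * τ) 0) MeasureTheory.volume x y :=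
    fun x y => (ramp_cont v a).intervalIntegrable _ _
  rw [← intervalIntegral.integral_add_adjacent_intervals (a := (0:ℝ)) (b := v/a) (c := ε)
      (hint _ _) (hint _ _)]
  have e1 : ∫ τ in (0:ℝ)..(v/a), max (v - a * τ) 0 = v * (v/a) - a * (v/a) ^ 2 / 2 :=
    ramp_eval_le v a (v/a) ha h0 (by field_simp; exact le_rfl)
  have e2 : ∫ τ in (v/a)..ε, max (v - a * τ) 0 = 0 := by
    rw [intervalIntegral.integral_congr (g := fun _ => (0:ℝ)) ?_]
    · simp
    · intro τ hτ
      rw [Set.uIcc_of_le h] at hτ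
      have h3 : v ≤ a * τ := by
        have := mul_le_mul_of_nonneg_left hτ.1 ha.le
        rwa [mul_div_cancel₀ _ ha.ne'] at this
      exact max_eq_right (by linarith)
  rw [e1, e2]
  field_simp
  ring


section Aux
variable {vl ve al ae φ x z t b ε d0 : ℝ}

lemma aux_vertex (hk : 0 < ae - al) (hzeq : (ae - al) * z = ve - vl + ae * φ) :
    ve * φ + (ve * (x - φ) - ae * (x - φ) ^ 2 / 2) - (vl * x - al * x ^ 2 / 2)
      ≤ ve * φ + (ve * (z - φ) - ae * (z - φ) ^ 2 / 2) - (vl * z - al * z ^ 2 / 2) := by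
  have h : (ve * φ + (ve * (z - φ) - ae * (z - φ) ^ 2 / 2) - (vl * z - al * z ^ 2 / 2))
      - (ve * φ + (ve * (x - φ) - ae * (x - φ) ^ 2 / 2) - (vl * x - al * x ^ 2 / 2))
      = (ae - al) * (x - z) ^ 2 / 2 := by linear_combination (x - z) * hzeq
  nlinarith [mul_nonneg hk.le (sq_nonneg (x - z)), h]

lemma aux_S (hal : 0 < al) (hae : 0 < ae)
    (h : 0 ≤ al * (ve - ae * (x - φ)) ^ 2 - ae * (vl - al * x) ^ 2) :
    ve * φ + (ve * (x - φ) - ae * (x - φ) ^ 2 / 2) - (vl * x - al * x ^ 2 / 2)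
      ≤ ve * φ + ve ^ 2 / (2 * ae) - vl ^ 2 / (2 * al) := by
  have hid : 2 * al * ae * ((ve * φ + ve ^ 2 / (2 * ae) - vl ^ 2 / (2 * al))
      - (ve * φ + (ve * (x - φ) - ae * (x - φ) ^ 2 / 2) - (vl * x - al * x ^ 2 / 2)))
      = al * (ve - ae * (x - φ)) ^ 2 - ae * (vl - al * x) ^ 2 := by field_simp; ring
  nlinarith [hid, h, mul_pos hal hae]

lemma aux_key2_easy (hal : 0 < al) (hea : ae ≤ al)
    (hB : 0 ≤ vl - al * x) (hf : vl - al * x ≤ ve - ae * (x - φ)) :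
    0 ≤ al * (ve - ae * (x - φ)) ^ 2 - ae * (vl - al * x) ^ 2 := by
  nlinarith [mul_nonneg (mul_nonneg hal.le (sub_nonneg.mpr hf))
      (by linarith : (0:ℝ) ≤ (ve - ae * (x - φ)) + (vl - al * x)),
    mul_nonneg (sub_nonneg.mpr hea) (sq_nonneg (vl - al * x))]

lemma aux_key2_hard (hal : 0 < al) (hae : 0 < ae) (hea : al ≤ ae)
    (htm : al * t = vl) (hA0 : ae * (t - φ) ≤ ve) (hxt : x ≤ t) :
    0 ≤ al * (ve - ae * (x - φ)) ^ 2 - ae * (vl - al * x) ^ 2 := by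
  have hB : vl - al * x = al * (t - x) := by linear_combination -htm
  have hA1 : ae * (t - x) ≤ ve - ae * (x - φ) := by nlinarith [hA0]
  have hA2 : (0:ℝ) ≤ ae * (t - x) := mul_nonneg hae.le (by linarith)
  rw [hB]
  nlinarith [mul_nonneg (mul_nonneg hal.le (sub_nonneg.mpr hA1))
      (by linarith : (0:ℝ) ≤ (ve - ae * (x - φ)) + ae * (t - x)),
    mul_nonneg (mul_nonneg (mul_nonneg hal.le hae.le) (sub_nonneg.mpr hea)) (sq_nonneg (t - x))]

lemma aux_decreasing (hk : 0 < ae - al) (hal : 0 < al) (hφ : 0 ≤ φ)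
    (hm : ve - vl + ae * φ < (ae - al) * φ) (hx1 : φ ≤ x) :
    ve * φ + (ve * (x - φ) - ae * (x - φ) ^ 2 / 2) - (vl * x - al * x ^ 2 / 2) ≤ 0 := by
  nlinarith [mul_nonneg (sub_nonneg.mpr hx1)
      (by linarith : (0:ℝ) ≤ (ae - al) * φ - (ve - vl + ae * φ)),
    mul_nonneg (sub_nonneg.mpr hx1)
      (by nlinarith [mul_le_mul_of_nonneg_left hx1 hk.le] :
        (0:ℝ) ≤ (ae - al) * x - (ve - vl + ae * φ)),
    mul_nonneg hφ (by linarith : (0:ℝ) ≤ vl - ve - al * φ),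
    mul_nonneg hal.le (sq_nonneg φ)]

lemma aux_Pphi (hea : ae ≤ al) (hx1 : φ ≤ x)
    (hf : ve - ae * (x - φ) ≤ vl - al * x) :
    ve * φ + (ve * (x - φ) - ae * (x - φ) ^ 2 / 2) - (vl * x - al * x ^ 2 / 2)
      ≤ ve * φ - (vl * φ - al * φ ^ 2 / 2) := by
  nlinarith [mul_nonneg (sub_nonneg.mpr hx1) (sub_nonneg.mpr hf),
    mul_nonneg (mul_nonneg (sub_nonneg.mpr hx1) (sub_nonneg.mpr hea)) (sub_nonneg.mpr hx1)]

lemma aux_Pphi_neg (hφ : 0 ≤ φ) (hal : 0 < al) (hvv : ve ≤ vl - al * φ) :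
    ve * φ - (vl * φ - al * φ ^ 2 / 2) ≤ 0 := by
  nlinarith [mul_nonneg hφ (by linarith : (0:ℝ) ≤ vl - al * φ - ve),
    mul_nonneg hal.le (sq_nonneg φ)]

lemma aux_R1_neg (hal : 0 < al) (hε : 0 ≤ ε) (hεb : ε ≤ b) (hb : 0 < b)
    (hq : ve * b - (vl * b - al * b ^ 2 / 2) ≤ 0) (hd : 0 ≤ d0) :
    ve * ε - (vl * ε - al * ε ^ 2 / 2) ≤ d0 := by
  nlinarith [mul_nonneg (mul_nonneg (mul_nonneg hal.le hε) hb.le)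
      (by linarith : (0:ℝ) ≤ b - ε),
    mul_nonneg hε (neg_nonneg.mpr hq), mul_nonneg hb.le hd, hb]

lemma aux_R1_pos (hal : 0 < al) (hε : 0 ≤ ε) (hεb : ε ≤ b) (hb : 0 < b)
    (hq : 0 ≤ ve * b - (vl * b - al * b ^ 2 / 2))
    (hbd : ve * b - (vl * b - al * b ^ 2 / 2) ≤ d0) :
    ve * ε - (vl * ε - al * ε ^ 2 / 2) ≤ d0 := by
  have hslope : 0 ≤ ve - vl + al * (b + ε) / 2 := by
    nlinarith [hq, hb, mul_nonneg (mul_nonneg hal.le hb.le) hε]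
  nlinarith [hbd, mul_nonneg (by linarith : (0:ℝ) ≤ b - ε) hslope]

lemma aux_R5 (hal : 0 < al) (h2 : t ≤ ε) (hεT : al * ε ≤ vl) :
    vl * t - al * t ^ 2 / 2 ≤ vl * ε - al * ε ^ 2 / 2 := by
  nlinarith [mul_nonneg (sub_nonneg.mpr h2)
    (by nlinarith [mul_le_mul_of_nonneg_left h2 hal.le] :
      (0:ℝ) ≤ vl - al * (ε + t) / 2)]

lemma aux_R4 (hae : 0 < ae) (s : ℝ) : ve * s - ae * s ^ 2 / 2 ≤ ve ^ 2 / (2 * ae) := by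
  have hd : ve ^ 2 / (2 * ae) - (ve * s - ae * s ^ 2 / 2) = (ve - ae * s) ^ 2 / (2 * ae) := by
    field_simp; ring
  linarith [hd, div_nonneg (sq_nonneg (ve - ae * s)) (by linarith : (0:ℝ) ≤ 2 * ae)]

end Aux

set_option maxHeartbeats 12000000 in
/-- If the initial distance `d0` is at least the closed-form minimum safety
distance `D`, then the inter-vehicle distance `d0 - J ε` stays nonnegative for all `ε ≥ 0`. -/
theorem min_safety_distance_guarantees_no_collision
    (vl ve al ae φ : ℝ)
    (hvl : 0 ≤ vl) (hve : 0 ≤ ve) (hal : 0 < al) (hae : 0 < ae) (hφ : 0 ≤ φ)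
    (vL vE J : ℝ → ℝ)
    (hvL : ∀ τ, vL τ = max (vl - al * τ) 0)
    (hvE : ∀ τ, vE τ = if τ < φ then ve else max (ve - ae * (τ - φ)) 0)
    (hJ : ∀ ε, J ε = ∫ τ in (0:ℝ)..ε, (vE τ - vL τ))
    (d0 : ℝ)
    (hd0 : d0 ≥
      (if al < ae ∧ φ ≤ (ve - vl + ae * φ) / (ae - al) ∧
          (ve - vl + ae * φ) / (ae - al) < min (φ + ve / ae) (vl / al)
        then max 0 (max (ve * φ + ve ^ 2 / (2 * ae) - vl ^ 2 / (2 * al))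
              (J ((ve - vl + ae * φ) / (ae - al))))
        else max 0 (ve * φ + ve ^ 2 / (2 * ae) - vl ^ 2 / (2 * al)))) :
    ∀ ε : ℝ, 0 ≤ ε → d0 - J ε ≥ 0 := by
  -- continuity of the two speed profiles
  have hvLfun : vL = fun τ => max (vl - al * τ) 0 := funext hvL
  have hvEfun : vE = fun τ => max (ve - ae * max (τ - φ) 0) 0 := by
    funext τ
    rw [hvE]
    rcases lt_or_ge τ φ with h | h
    · rw [if_pos h, max_eq_right (by linarith : τ - φ ≤ 0)]
      simp [max_eq_left hve]
    · rw [if_neg (not_lt.mpr h), max_eq_left (by linarith : (0:ℝ) ≤ τ - φ)]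
  have hvLc : Continuous vL := by rw [hvLfun]; fun_prop
  have hvEc : Continuous vE := by rw [hvEfun]; fun_prop
  -- J as a difference of two integrals
  have hJsub : ∀ ε : ℝ, J ε = (∫ τ in (0:ℝ)..ε, vE τ) - ∫ τ in (0:ℝ)..ε, vL τ := by
    intro ε
    rw [hJ]
    exact intervalIntegral.integral_sub (hvEc.intervalIntegrable _ _) (hvLc.intervalIntegrable _ _)
  -- lead-vehicle distance
  have hL_le : ∀ ε : ℝ, 0 ≤ ε → ε ≤ vl / al →
      (∫ τ in (0:ℝ)..ε, vL τ) = vl * ε - al * ε ^ 2 / 2 := by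
    intro ε h0 h1
    rw [hvLfun]
    refine ramp_eval_le vl al ε hal h0 ?_
    calc al * ε ≤ al * (vl / al) := mul_le_mul_of_nonneg_left h1 hal.le
    _ = vl := by field_simp
  have hL_ge : ∀ ε : ℝ, vl / al ≤ ε →
      (∫ τ in (0:ℝ)..ε, vL τ) = vl ^ 2 / (2 * al) := by
    intro ε h1
    rw [hvLfun]
    exact ramp_eval_ge vl al ε hal hvl h1
  -- ego-vehicle distance
  have hE_le : ∀ ε : ℝ, 0 ≤ ε → ε ≤ φ → (∫ τ in (0:ℝ)..ε, vE τ) = ve * ε := by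
    intro ε h0 h1
    rw [intervalIntegral.integral_congr (g := fun _ => ve) ?_]
    · simp [mul_comm]
    · intro τ hτ
      rw [Set.uIcc_of_le h0] at hτ
      rw [hvE]
      rcases lt_or_ge τ φ with h | h
      · rw [if_pos h]
      · have hτφ : τ = φ := le_antisymm (hτ.2.trans h1) h
        rw [if_neg (not_lt.mpr h), hτφ]
        simp [max_eq_left hve]
  have hE_mid : ∀ ε : ℝ, φ ≤ ε → ε ≤ φ + ve / ae →
      (∫ τ in (0:ℝ)..ε, vE τ) = ve * φ + (ve * (ε - φ) - ae * (ε - φ) ^ 2 / 2) := by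
    intro ε h1 h2
    rw [← intervalIntegral.integral_add_adjacent_intervals (a := (0:ℝ)) (b := φ) (c := ε)
        (hvEc.intervalIntegrable _ _) (hvEc.intervalIntegrable _ _),
      hE_le φ hφ le_rfl]
    have e2 : (∫ τ in φ..ε, vE τ) = ∫ τ in φ..ε, max (ve - ae * (τ - φ)) 0 := by
      refine intervalIntegral.integral_congr ?_
      intro τ hτ
      rw [Set.uIcc_of_le h1] at hτ
      rw [hvE, if_neg (not_lt.mpr hτ.1)]
    rw [e2, intervalIntegral.integral_comp_sub_right (fun s => max (ve - ae * s) 0) φ,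
      sub_self]
    rw [ramp_eval_le ve ae (ε - φ) hae (by linarith) ?_]
    calc ae * (ε - φ) ≤ ae * (ve / ae) := mul_le_mul_of_nonneg_left (by linarith) hae.le
    _ = ve := by field_simp
  have hE_ge : ∀ ε : ℝ, φ + ve / ae ≤ ε →
      (∫ τ in (0:ℝ)..ε, vE τ) = ve * φ + ve ^ 2 / (2 * ae) := by
    intro ε h1
    have hW : 0 ≤ ve / ae := div_nonneg hve hae.le
    rw [← intervalIntegral.integral_add_adjacent_intervals (a := (0:ℝ)) (b := φ + ve / ae)
        (c := ε) (hvEc.intervalIntegrable _ _) (hvEc.intervalIntegrable _ _),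
      hE_mid (φ + ve / ae) (by linarith) le_rfl]
    have e2 : (∫ τ in (φ + ve / ae)..ε, vE τ) = 0 := by
      rw [intervalIntegral.integral_congr (g := fun _ => (0:ℝ)) ?_]
      · simp
      · intro τ hτ
        rw [Set.uIcc_of_le h1] at hτ
        rw [hvE, if_neg (not_lt.mpr (by linarith [hτ.1] : φ ≤ τ))]
        refine max_eq_right ?_
        have : ae * (ve / ae) ≤ ae * (τ - φ) := mul_le_mul_of_nonneg_left (by linarith [hτ.1]) hae.le
        rw [mul_div_cancel₀ _ hae.ne'] at this
        linarith
    rw [e2]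
    field_simp
    ring
  -- abbreviations in comments: W = ve/ae, T = vl/al, Z = (ve-vl+ae*φ)/(ae-al),
  -- S = ve*φ + ve^2/(2*ae) - vl^2/(2*al), P x = ve*φ + (ve*(x-φ) - ae*(x-φ)^2/2) - (vl*x - al*x^2/2)
  have hW0 : 0 ≤ ve / ae := div_nonneg hve hae.le
  have hT0 : 0 ≤ vl / al := div_nonneg hvl hal.le
  have hX0 : 0 ≤ ve ^ 2 / (2 * ae) := by positivity
  have hTmul : al * (vl / al) = vl := by field_simp
  have hWmul : ae * (ve / ae) = ve := by field_simp
  have hD0 : (0:ℝ) ≤ d0 := by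
    have h := hd0
    split_ifs at h
    · exact le_trans (le_max_left _ _) h
    · exact le_trans (le_max_left _ _) h
  have hDS : ve * φ + ve ^ 2 / (2 * ae) - vl ^ 2 / (2 * al) ≤ d0 := by
    have h := hd0
    split_ifs at h
    · exact le_trans (le_trans (le_max_left _ _) (le_max_right _ _)) h
    · exact le_trans (le_max_right _ _) h
  -- the central bound on the mid-region profile value
  have hkey : ∀ x : ℝ, φ ≤ x → x ≤ φ + ve / ae → x ≤ vl / al →
      ve * φ + (ve * (x - φ) - ae * (x - φ) ^ 2 / 2) - (vl * x - al * x ^ 2 / 2) ≤ d0 := by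
    intro x hx1 hx2 hx3
    have hxφ0 : 0 ≤ x := le_trans hφ hx1
    have hxT : al * x ≤ vl := by
      calc al * x ≤ al * (vl / al) := mul_le_mul_of_nonneg_left hx3 hal.le
      _ = vl := hTmul
    have hxW : ae * (x - φ) ≤ ve := by
      have h1 : ae * (x - φ) ≤ ae * (ve / ae) := mul_le_mul_of_nonneg_left (by linarith) hae.le
      rw [hWmul] at h1; exact h1
    have hd := hd0
    split_ifs at hd with hC
    · -- resonance case: bound by the value at the critical point Z
      obtain ⟨hlt, hZφ, hZm⟩ := hC
      have hk : (0:ℝ) < ae - al := by linarith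
      have hZeq : (ae - al) * ((ve - vl + ae * φ) / (ae - al)) = ve - vl + ae * φ := by
        field_simp
      have hZW : (ve - vl + ae * φ) / (ae - al) ≤ φ + ve / ae :=
        le_of_lt (lt_of_lt_of_le hZm (min_le_left _ _))
      have hZT : (ve - vl + ae * φ) / (ae - al) ≤ vl / al :=
        le_of_lt (lt_of_lt_of_le hZm (min_le_right _ _))
      have hJZ : J ((ve - vl + ae * φ) / (ae - al)) =
          ve * φ + (ve * ((ve - vl + ae * φ) / (ae - al) - φ)
            - ae * ((ve - vl + ae * φ) / (ae - al) - φ) ^ 2 / 2)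
          - (vl * ((ve - vl + ae * φ) / (ae - al))
            - al * ((ve - vl + ae * φ) / (ae - al)) ^ 2 / 2) := by
        rw [hJsub, hE_mid _ hZφ hZW, hL_le _ (le_trans hφ hZφ) hZT]
      have hJZd : J ((ve - vl + ae * φ) / (ae - al)) ≤ d0 :=
        le_trans (le_trans (le_max_right _ _) (le_max_right _ _)) hd
      refine le_trans ?_ hJZd
      rw [hJZ]
      exact aux_vertex hk hZeq
    · -- no resonance: bound by max 0 S
      have hS : ve * φ + ve ^ 2 / (2 * ae) - vl ^ 2 / (2 * al) ≤ d0 :=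
        le_trans (le_max_right _ _) hd
      have hZ0 : (0:ℝ) ≤ d0 := le_trans (le_max_left _ _) hd
      rcases le_or_gt ae al with hea | hea
      · -- al ≥ ae
        rcases le_or_gt (vl - al * x) (ve - ae * (x - φ)) with hf | hf
        · exact le_trans (aux_S hal hae (aux_key2_easy hal hea (by linarith) hf)) hS
        · have hPφ := aux_Pphi hea hx1 hf.le
          have hφT : al * φ ≤ vl := by linarith [mul_le_mul_of_nonneg_left hx1 hal.le]
          rcases le_or_gt ve (vl - al * φ) with hvv | hvv
          · linarith [aux_Pphi_neg hφ hal hvv, hPφ, hZ0]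
          · have hB0 : 0 ≤ vl - al * φ := by linarith
            have hf0 : vl - al * φ ≤ ve - ae * (φ - φ) := by linarith
            have hPφS := aux_S (x := φ) hal hae (aux_key2_easy (x := φ) hal hea hB0 hf0)
            linarith [hPφ, hPφS, hS]
      · -- al < ae
        have hk : (0:ℝ) < ae - al := by linarith
        have hZeq : (ae - al) * ((ve - vl + ae * φ) / (ae - al)) = ve - vl + ae * φ := by
          field_simp
        rcases le_or_gt φ ((ve - vl + ae * φ) / (ae - al)) with hZφ | hZφ
        · -- critical point past min(tfe,tfl)
          have hmin : min (φ + ve / ae) (vl / al) ≤ (ve - vl + ae * φ) / (ae - al) :=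
            not_lt.mp (fun h => hC ⟨hea, hZφ, h⟩)
          have hTZ : (ae - al) * (vl / al) ≤ ve - vl + ae * φ := by
            rcases le_total (vl / al) (φ + ve / ae) with hm | hm
            · rw [min_eq_right hm] at hmin
              calc (ae - al) * (vl / al) ≤ (ae - al) * ((ve - vl + ae * φ) / (ae - al)) :=
                  mul_le_mul_of_nonneg_left hmin hk.le
              _ = ve - vl + ae * φ := hZeq
            · rw [min_eq_left hm] at hmin
              have h1 : (ae - al) * (φ + ve / ae) ≤ ve - vl + ae * φ := by
                calc (ae - al) * (φ + ve / ae)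
                    ≤ (ae - al) * ((ve - vl + ae * φ) / (ae - al)) :=
                      mul_le_mul_of_nonneg_left hmin hk.le
                _ = ve - vl + ae * φ := hZeq
              have h2 : vl ≤ al * (φ + ve / ae) := by linarith [hWmul, h1]
              have h3 : vl / al ≤ φ + ve / ae := by
                rw [div_le_iff₀ hal]
                linarith [h2]
              calc (ae - al) * (vl / al) ≤ (ae - al) * (φ + ve / ae) :=
                  mul_le_mul_of_nonneg_left h3 hk.le
              _ ≤ ve - vl + ae * φ := h1
          have hA0 : ae * (vl / al - φ) ≤ ve := by linarith [hTmul, hTZ]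
          exact le_trans (aux_S hal hae (aux_key2_hard hal hae hea.le hTmul hA0 hx3)) hS
        · -- Z < φ : profile nonincreasing past φ
          have hmφ : ve - vl + ae * φ < (ae - al) * φ := by
            calc ve - vl + ae * φ = (ae - al) * ((ve - vl + ae * φ) / (ae - al)) := hZeq.symm
            _ < (ae - al) * φ := mul_lt_mul_of_pos_left hZφ hk
          linarith [aux_decreasing hk hal hφ hmφ hx1, hZ0]
  -- now the region-by-region analysis
  intro ε hε
  rw [ge_iff_le, sub_nonneg]
  rcases le_or_gt ε φ with h1 | h1
  · rcases le_or_gt ε (vl / al) with h2 | h2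
    · -- R1 : ε ≤ φ, ε ≤ T
      have hJε : J ε = ve * ε - (vl * ε - al * ε ^ 2 / 2) := by
        rw [hJsub, hE_le ε hε h1, hL_le ε hε h2]
      rw [hJε]
      rcases le_total φ (vl / al) with h3 | h3
      · -- endpoint is φ
        rcases eq_or_lt_of_le hφ with hφ0 | hφ0
        · have hε0 : ε = 0 := le_antisymm (by linarith) hε
          rw [hε0]; nlinarith [hD0]
        · have hb := hkey φ le_rfl (by linarith) h3
          rcases le_or_gt (ve * φ - (vl * φ - al * φ ^ 2 / 2)) 0 with hq | hq
          · exact aux_R1_neg hal hε h1 hφ0 hq hD0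
          · exact aux_R1_pos hal hε h1 hφ0 hq.le (by linarith [hb])
      · -- endpoint is T = vl/al
        rcases eq_or_lt_of_le hT0 with hT0' | hT0'
        · have hε0 : ε = 0 := le_antisymm (by linarith) hε
          rw [hε0]; nlinarith [hD0]
        · have hqT : ve * (vl / al) - vl ^ 2 / (2 * al) ≤ d0 := by
            have h4 : ve * (vl / al) ≤ ve * φ := mul_le_mul_of_nonneg_left h3 hve
            linarith [hDS, hX0]
          have hY' : vl * (vl / al) - al * (vl / al) ^ 2 / 2 = vl ^ 2 / (2 * al) := by
            field_simp; ring
          rcases le_or_gt (ve * (vl / al) - vl ^ 2 / (2 * al)) 0 with hq | hq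
          · exact aux_R1_neg hal hε h2 hT0' (by linarith [hY', hq]) hD0
          · exact aux_R1_pos hal hε h2 hT0' (by linarith [hY', hq]) (by linarith [hY', hqT])
    · -- R2 : T < ε ≤ φ
      have hJε : J ε = ve * ε - vl ^ 2 / (2 * al) := by
        rw [hJsub, hE_le ε hε h1, hL_ge ε h2.le]
      rw [hJε]
      have h4 : ve * ε ≤ ve * φ := mul_le_mul_of_nonneg_left h1 hve
      linarith [hDS, hX0]
  · rcases le_or_gt ε (φ + ve / ae) with h2 | h2
    · rcases le_or_gt ε (vl / al) with h3 | h3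
      · -- R3 : mid region
        have hJε : J ε = ve * φ + (ve * (ε - φ) - ae * (ε - φ) ^ 2 / 2)
            - (vl * ε - al * ε ^ 2 / 2) := by
          rw [hJsub, hE_mid ε h1.le h2, hL_le ε hε h3]
        rw [hJε]
        exact hkey ε h1.le h2 h3
      · -- R4 : lead stopped, ego braking
        have hJε : J ε = ve * φ + (ve * (ε - φ) - ae * (ε - φ) ^ 2 / 2)
            - vl ^ 2 / (2 * al) := by
          rw [hJsub, hE_mid ε h1.le h2, hL_ge ε h3.le]
        rw [hJε]
        linarith [hDS, aux_R4 (ve := ve) hae (ε - φ)]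
    · rcases le_or_gt ε (vl / al) with h3 | h3
      · -- R5 : ego stopped, lead still moving
        have hJε : J ε = ve * φ + ve ^ 2 / (2 * ae) - (vl * ε - al * ε ^ 2 / 2) := by
          rw [hJsub, hE_ge ε h2.le, hL_le ε hε h3]
        rw [hJε]
        have hkt := hkey (φ + ve / ae) (by linarith) le_rfl (by linarith)
        have hmt : ve * (φ + ve / ae - φ) - ae * (φ + ve / ae - φ) ^ 2 / 2
            = ve ^ 2 / (2 * ae) := by
          field_simp; ring
        rw [hmt] at hkt
        have hεT : al * ε ≤ vl := by
          calc al * ε ≤ al * (vl / al) := mul_le_mul_of_nonneg_left h3 hal.le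
          _ = vl := hTmul
        linarith [hkt, aux_R5 hal h2.le hεT]
      · -- R6 : both stopped
        have hJε : J ε = ve * φ + ve ^ 2 / (2 * ae) - vl ^ 2 / (2 * al) := by
          rw [hJsub, hE_ge ε h2.le, hL_ge ε h3.le]
        rw [hJε]
        exact hDS
end

section
/- The minimum safety distance sup_{ε ≥ 0} J(ε) admits the following closed form obtained by enumerating the candidate maximizers: if a_e > a_l and ε* := (v_e − v_l + a_e·φ)/(a_e − a_l) lies in [φ, min(t_f^e, t_f^l)), then sup_{ε ≥ 0} J(ε) = max(0, v_e·φ + v_e²/(2a_e) − v_l²/(2a_l), J(ε*)); otherwise sup_{ε ≥ 0} J(ε) = max(0, v_e·φ + v_e²/(2a_e) − v_l²/(2a_l)). Moreover the supremum is attained at some ε ≥ 0. -/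
open intervalIntegral

set_option maxHeartbeats 1000000


lemma sq_max_deriv (x : ℝ) : HasDerivAt (fun y : ℝ => max y 0 ^ 2) (2 * max x 0) x := by
  rcases lt_trichotomy x 0 with h | h | h
  · have hev : (fun y : ℝ => max y 0 ^ 2) =ᶠ[nhds x] fun _ => (0:ℝ) := by
      filter_upwards [Iio_mem_nhds h] with y hy
      simp [max_eq_right (le_of_lt (Set.mem_Iio.1 hy))]
    rw [max_eq_right h.le]
    simpa using (hasDerivAt_const x (0:ℝ)).congr_of_eventuallyEq hev
  · subst h
    rw [hasDerivAt_iff_isLittleO]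
    simp only [max_self, mul_zero, zero_pow, smul_zero, sub_zero]
    have h1 : (fun y : ℝ => max y 0 ^ 2) =O[nhds (0:ℝ)] (fun y => y * y) := by
      apply Asymptotics.IsBigO.of_bound 1
      filter_upwards with y
      rcases le_total y 0 with hy | hy
      · simp only [max_eq_right hy, one_mul, ← abs_mul, ← sq, sq_abs]
        simp [abs_of_nonneg (sq_nonneg y), sq_nonneg y]
      · simp [max_eq_left hy, one_mul, ← abs_mul, ← sq, sq_abs, le_refl]
    have h2 : (fun y : ℝ => y * y) =o[nhds (0:ℝ)] (fun y => y) := by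
      have h3 := (Asymptotics.isLittleO_one_iff ℝ (f := fun y : ℝ => y) (l := nhds (0:ℝ))).2
        (by exact Filter.tendsto_id)
      simpa using h3.mul_isBigO (Asymptotics.isBigO_refl (fun y : ℝ => y) (nhds 0))
    have := h1.trans_isLittleO h2
    simpa using this
  · have hev : (fun y : ℝ => max y 0 ^ 2) =ᶠ[nhds x] fun y => y ^ 2 := by
      filter_upwards [Ioi_mem_nhds h] with y hy
      simp [max_eq_left (le_of_lt (Set.mem_Ioi.1 hy))]
    rw [max_eq_left h.le]
    have hp := hasDerivAt_pow 2 x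
    have : HasDerivAt (fun y : ℝ => y ^ 2) (2 * x) x := by simpa [mul_comm] using hp
    exact this.congr_of_eventuallyEq hev

lemma max_antideriv (c a : ℝ) (ha : 0 < a) (t : ℝ) :
    HasDerivAt (fun t : ℝ => (c ^ 2 - max (c - a * t) 0 ^ 2) / (2 * a)) (max (c - a * t) 0) t := by
  have h1 : HasDerivAt (fun t : ℝ => c - a * t) (-a) t := by
    simpa using ((hasDerivAt_id t).const_mul a).const_sub c
  have h2 := (sq_max_deriv (c - a * t)).comp t h1
  have h3 := ((h2.const_sub (c ^ 2)).div_const (2 * a))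
  refine h3.congr_deriv ?_
  rw [div_eq_iff (by positivity)]
  ring

lemma E_deriv (ve ae φ : ℝ) (hve : 0 ≤ ve) (hae : 0 < ae) (t : ℝ) :
    HasDerivAt (fun t : ℝ => if t ≤ φ then ve * t
        else ve * φ + (ve ^ 2 - max (ve - ae * (t - φ)) 0 ^ 2) / (2 * ae))
      (if t < φ then ve else max (ve - ae * (t - φ)) 0) t := by
  set E : ℝ → ℝ := fun t => if t ≤ φ then ve * t
      else ve * φ + (ve ^ 2 - max (ve - ae * (t - φ)) 0 ^ 2) / (2 * ae) with hE
  have hb2 : ∀ s : ℝ, HasDerivAt (fun t : ℝ => ve * φ + (ve ^ 2 - max (ve - ae * (t - φ)) 0 ^ 2) / (2 * ae))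
      (max (ve - ae * (s - φ)) 0) s := by
    intro s
    have h1 : HasDerivAt (fun t : ℝ => (ve ^ 2 - max (ve - ae * (t - φ)) 0 ^ 2) / (2 * ae))
        (max (ve - ae * (s - φ)) 0) s := by
      have := max_antideriv ve ae hae (s - φ)
      have h2 : HasDerivAt (fun t : ℝ => t - φ) 1 s := (hasDerivAt_id s).sub_const φ
      have h3 := this.comp s h2
      exact h3.congr_deriv (mul_one _)
    simpa using h1.const_add (ve * φ)
  rcases lt_trichotomy t φ with h | h | h
  · rw [if_pos h]
    have hev : E =ᶠ[nhds t] fun t => ve * t := by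
      filter_upwards [Iio_mem_nhds h] with y hy
      simp [hE, le_of_lt (Set.mem_Iio.1 hy)]
    have hid : HasDerivAt (fun t : ℝ => ve * t) ve t := by simpa using (hasDerivAt_id t).const_mul ve
    exact hid.congr_of_eventuallyEq hev
  · subst h
    rw [if_neg (lt_irrefl t)]
    have hmax : max (ve - ae * (t - t)) 0 = ve := by simp [hve]
    rw [hmax]
    have hIic : HasDerivWithinAt E ve (Set.Iic t) t := by
      have : HasDerivWithinAt (fun t : ℝ => ve * t) ve (Set.Iic t) t := by
        simpa using ((hasDerivAt_id t).const_mul ve).hasDerivWithinAt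
      exact this.congr (fun y hy => by simp [hE, Set.mem_Iic.1 hy]) (by simp [hE])
    have hIci : HasDerivWithinAt E ve (Set.Ici t) t := by
      have hb := (hb2 t).hasDerivWithinAt (s := Set.Ici t)
      rw [hmax] at hb
      refine hb.congr (fun y hy => ?_) ?_
      · rcases eq_or_lt_of_le (Set.mem_Ici.1 hy) with h1 | h1
        · simp [hE, ← h1, hve]
        · simp [hE, not_le.2 h1]
      · simp [hE, hve]
    have := hIic.union hIci
    rw [Set.Iic_union_Ici] at this
    rw [hasDerivWithinAt_univ] at this
    exact this
  · rw [if_neg (not_lt.2 h.le)]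
    have hev : E =ᶠ[nhds t] fun t => ve * φ + (ve ^ 2 - max (ve - ae * (t - φ)) 0 ^ 2) / (2 * ae) := by
      filter_upwards [Ioi_mem_nhds h] with y hy
      simp [hE, not_le.2 (Set.mem_Ioi.1 hy)]
    exact (hb2 t).congr_of_eventuallyEq hev

lemma J_eq_Phi (vl ve al ae φ : ℝ)
    (hvl : 0 ≤ vl) (hve : 0 ≤ ve) (hal : 0 < al) (hae : 0 < ae) (hφ : 0 ≤ φ)
    (vL vE J : ℝ → ℝ)
    (hvL : ∀ τ, vL τ = max (vl - al * τ) 0)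
    (hvE : ∀ τ, vE τ = if τ < φ then ve else max (ve - ae * (τ - φ)) 0)
    (hJ : ∀ ε, J ε = ∫ τ in (0:ℝ)..ε, (vE τ - vL τ)) (ε : ℝ) :
    J ε = (if ε ≤ φ then ve * ε
        else ve * φ + (ve ^ 2 - max (ve - ae * (ε - φ)) 0 ^ 2) / (2 * ae))
      - (vl ^ 2 - max (vl - al * ε) 0 ^ 2) / (2 * al) := by
  set Φ : ℝ → ℝ := fun t => (if t ≤ φ then ve * t
      else ve * φ + (ve ^ 2 - max (ve - ae * (t - φ)) 0 ^ 2) / (2 * ae))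
    - (vl ^ 2 - max (vl - al * t) 0 ^ 2) / (2 * al) with hΦ
  have hderiv : ∀ t : ℝ, HasDerivAt Φ (vE t - vL t) t := by
    intro t
    rw [hvE, hvL]
    exact (E_deriv ve ae φ hve hae t).sub (max_antideriv vl al hal t)
  have hcontE : Continuous vE := by
    have heq : vE = fun τ => max (ve - ae * max (τ - φ) 0) 0 := by
      funext τ
      rw [hvE]
      rcases lt_or_ge τ φ with h | h
      · rw [if_pos h, max_eq_right (show τ - φ ≤ 0 by linarith), mul_zero, sub_zero,
          max_eq_left hve]
      · rw [if_neg (not_lt.2 h), max_eq_left (show (0:ℝ) ≤ τ - φ by linarith)]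
    rw [heq]; fun_prop
  have hcontL : Continuous vL := by
    have heq : vL = fun τ => max (vl - al * τ) 0 := funext hvL
    rw [heq]; fun_prop
  have hint : IntervalIntegrable (fun τ => vE τ - vL τ) MeasureTheory.volume 0 ε :=
    (hcontE.sub hcontL).intervalIntegrable 0 ε
  have hftc := intervalIntegral.integral_eq_sub_of_hasDerivAt
    (f := Φ) (f' := fun τ => vE τ - vL τ) (a := (0:ℝ)) (b := ε)
    (fun t _ => hderiv t) hint
  have hΦ0 : Φ 0 = 0 := by
    simp only [hΦ]
    rw [if_pos hφ, mul_zero, mul_zero, sub_zero, max_eq_left hvl]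
    ring
  rw [hJ, hftc, hΦ0, sub_zero]



lemma Phi_isGreatest (vl ve al ae φ : ℝ)
    (hvl : 0 ≤ vl) (hve : 0 ≤ ve) (hal : 0 < al) (hae : 0 < ae) (hφ : 0 ≤ φ)
    (Φf : ℝ → ℝ)
    (hΦ : ∀ t, Φf t = (if t ≤ φ then ve * t
        else ve * φ + (ve ^ 2 - max (ve - ae * (t - φ)) 0 ^ 2) / (2 * ae))
      - (vl ^ 2 - max (vl - al * t) 0 ^ 2) / (2 * al)) :
    IsGreatest (Φf '' {ε : ℝ | 0 ≤ ε})
      (if al < ae ∧ φ ≤ (ve - vl + ae * φ) / (ae - al) ∧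
          (ve - vl + ae * φ) / (ae - al) < min (φ + ve / ae) (vl / al)
        then max 0 (max (ve * φ + ve ^ 2 / (2 * ae) - vl ^ 2 / (2 * al))
              (Φf ((ve - vl + ae * φ) / (ae - al))))
        else max 0 (ve * φ + ve ^ 2 / (2 * ae) - vl ^ 2 / (2 * al))) := by
  have h2 : (0:ℝ) < 2 * al * ae := by positivity
  have hΦ0 : Φf 0 = 0 := by
    rw [hΦ, if_pos hφ]
    have h' : vl - al * 0 = vl := by ring
    rw [h', max_eq_left hvl]
    ring
  have hcases : ∀ ε : ℝ, 0 ≤ ε →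
      (ε ≤ φ ∧ al * ε ≤ vl ∧
        2*al*ae * Φf ε = 2*al*ae*(ve-vl)*ε + al^2*ae*ε^2) ∨
      (ε ≤ φ ∧ vl ≤ al * ε ∧
        2*al*ae * Φf ε = 2*al*ae*ve*ε - ae*vl^2) ∨
      (φ ≤ ε ∧ al * ε ≤ vl ∧ ae*(ε-φ) ≤ ve ∧
        2*al*ae * Φf ε = (2*al*ae*ve*φ + al*ve^2 - ae*vl^2)
          + ae*(vl-al*ε)^2 - al*(ve-ae*(ε-φ))^2) ∨
      (φ ≤ ε ∧ al * ε ≤ vl ∧ ve ≤ ae*(ε-φ) ∧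
        2*al*ae * Φf ε = (2*al*ae*ve*φ + al*ve^2 - ae*vl^2) + ae*(vl-al*ε)^2) ∨
      (φ ≤ ε ∧ vl ≤ al * ε ∧ ae*(ε-φ) ≤ ve ∧
        2*al*ae * Φf ε = (2*al*ae*ve*φ + al*ve^2 - ae*vl^2) - al*(ve-ae*(ε-φ))^2) ∨
      (φ ≤ ε ∧ vl ≤ al * ε ∧ ve ≤ ae*(ε-φ) ∧
        2*al*ae * Φf ε = (2*al*ae*ve*φ + al*ve^2 - ae*vl^2)) := by
    intro ε hε
    rcases le_total ε φ with h1 | h1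
    · rcases le_total (al*ε) vl with h2' | h2'
      · refine Or.inl ⟨h1, h2', ?_⟩
        rw [hΦ, if_pos h1, max_eq_left (by linarith)]
        field_simp; ring
      · refine Or.inr (Or.inl ⟨h1, h2', ?_⟩)
        rw [hΦ, if_pos h1, max_eq_right (by linarith)]
        field_simp; ring
    · rcases le_total (al*ε) vl with h2' | h2' <;> rcases le_total (ae*(ε-φ)) ve with h3 | h3
      · rcases eq_or_lt_of_le h1 with he | he
        · refine Or.inr (Or.inr (Or.inl ⟨h1, h2', h3, ?_⟩))
          rw [hΦ, if_pos he.ge, max_eq_left (by linarith)]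
          rw [← he]
          field_simp; ring
        · refine Or.inr (Or.inr (Or.inl ⟨h1, h2', h3, ?_⟩))
          rw [hΦ, if_neg (not_le.2 he), max_eq_left (by linarith), max_eq_left (by linarith)]
          field_simp; ring
      · refine Or.inr (Or.inr (Or.inr (Or.inl ⟨h1, h2', h3, ?_⟩)))
        rcases eq_or_lt_of_le h1 with he | he
        · have hve0 : ve = 0 := by nlinarith [he.ge, h3]
          rw [hΦ, if_pos he.ge, max_eq_left (by linarith)]
          rw [← he, hve0]; field_simp; ring
        · rw [hΦ, if_neg (not_le.2 he), max_eq_left (show (0:ℝ) ≤ vl - al*ε by linarith),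
            max_eq_right (show ve - ae*(ε-φ) ≤ 0 by linarith)]
          field_simp; ring
      · refine Or.inr (Or.inr (Or.inr (Or.inr (Or.inl ⟨h1, h2', h3, ?_⟩))))
        rcases eq_or_lt_of_le h1 with he | he
        · rw [hΦ, if_pos he.ge, max_eq_right (by linarith)]
          rw [← he]; field_simp; ring
        · rw [hΦ, if_neg (not_le.2 he), max_eq_right (show vl - al*ε ≤ 0 by linarith),
            max_eq_left (show (0:ℝ) ≤ ve - ae*(ε-φ) by linarith)]
          field_simp; ring
      · refine Or.inr (Or.inr (Or.inr (Or.inr (Or.inr ⟨h1, h2', h3, ?_⟩))))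
        rcases eq_or_lt_of_le h1 with he | he
        · have hve0 : ve = 0 := by nlinarith [he.ge, h3]
          rw [hΦ, if_pos he.ge, max_eq_right (by linarith)]
          rw [← he, hve0]; field_simp; ring
        · rw [hΦ, if_neg (not_le.2 he), max_eq_right (show vl - al*ε ≤ 0 by linarith),
            max_eq_right (show ve - ae*(ε-φ) ≤ 0 by linarith)]
          field_simp; ring
  by_cases hc : al < ae ∧ φ ≤ (ve - vl + ae * φ) / (ae - al) ∧
      (ve - vl + ae * φ) / (ae - al) < min (φ + ve / ae) (vl / al)
  · obtain ⟨hc1, hc2, hc3⟩ := hc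
    rw [if_pos ⟨hc1, hc2, hc3⟩]
    set e : ℝ := (ve - vl + ae * φ) / (ae - al) with he_def
    have hA : 0 < ae - al := by linarith
    have hee : (ae - al) * e = ve - vl + ae * φ := by
      rw [he_def]; field_simp
    have he_tfl : al * e < vl := by
      have h3 := lt_of_lt_of_le hc3 (min_le_right _ _)
      have h4 := (lt_div_iff₀ hal).1 h3
      linarith [h4]
    have he_tfe : ae * e < ae * φ + ve := by
      have h4 := lt_of_lt_of_le hc3 (min_le_left _ _)
      have h5 := mul_lt_mul_of_pos_left h4 hae
      have h6 : ae * (φ + ve / ae) = ae * φ + ve := by field_simp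
      linarith [h5, h6.le, h6.ge]
    have he0 : 0 ≤ e := le_trans hφ hc2
    clear_value e
    have hRid : ∀ x : ℝ, (2*al*ae*ve*φ + al*ve^2 - ae*vl^2) + ae*(vl-al*x)^2 - al*(ve-ae*(x-φ))^2
        = ((2*al*ae*ve*φ + al*ve^2 - ae*vl^2) + (ae-al)*(vl-al*e)^2) - al*ae*(ae-al)*(x-e)^2 := by
      intro x
      linear_combination (al*(ae-al)*e + al*(vl + ve + ae*φ - 2*ae*x)) * hee
    have hPKe : 2*al*ae * Φf e = (2*al*ae*ve*φ + al*ve^2 - ae*vl^2) + (ae-al)*(vl-al*e)^2 := by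
      rcases eq_or_lt_of_le hc2 with heq | hlt
      · rw [hΦ, if_pos heq.ge]
        rw [← heq]
        have hee' : (ae - al) * φ = ve - vl + ae * φ := by
          rw [← heq] at hee; exact hee
        have hve_w : ve = vl - al * φ := by linarith [hee']
        have hmx : (0:ℝ) ≤ vl - al * φ := by rw [← hve_w]; exact hve
        rw [max_eq_left hmx, hve_w]
        field_simp; ring
      · rw [hΦ, if_neg (not_le.2 hlt)]
        have hwe : ve - ae * (e - φ) = vl - al * e := by linear_combination -hee
        have hw0 : (0:ℝ) ≤ vl - al * e := by linarith
        rw [hwe, max_eq_left hw0]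
        field_simp; ring
    constructor
    · -- membership
      have hDK : ve * φ + ve ^ 2 / (2 * ae) - vl ^ 2 / (2 * al) ≤ Φf e := by
        have hPD : 2*al*ae*(ve * φ + ve ^ 2 / (2 * ae) - vl ^ 2 / (2 * al))
            = 2*al*ae*ve*φ + al*ve^2 - ae*vl^2 := by field_simp
        have hstep : 2*al*ae*(ve * φ + ve ^ 2 / (2 * ae) - vl ^ 2 / (2 * al)) ≤ 2*al*ae * Φf e := by
          rw [hPD, hPKe]
          linarith [mul_nonneg hA.le (sq_nonneg (vl - al*e))]
        exact le_of_mul_le_mul_left hstep h2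
      rcases le_total (Φf e) 0 with hK0 | hK0
      · rw [max_eq_left (max_le (by linarith) hK0)]
        exact ⟨0, Set.mem_setOf.2 (le_refl 0), hΦ0⟩
      · rw [max_eq_right hDK, max_eq_right hK0]
        exact ⟨e, he0, rfl⟩
    · -- upper bound
      intro x hx
      obtain ⟨ε, hε, rfl⟩ := hx
      have hε0 : (0:ℝ) ≤ ε := hε
      set M := max 0 (max (ve * φ + ve ^ 2 / (2 * ae) - vl ^ 2 / (2 * al)) (Φf e)) with hM
      clear_value M
      have hM0 : (0:ℝ) ≤ M := by rw [hM]; exact le_max_left _ _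
      have hMD : ve * φ + ve ^ 2 / (2 * ae) - vl ^ 2 / (2 * al) ≤ M := by
        rw [hM]; exact le_trans (le_max_left _ _) (le_max_right _ _)
      have hMK : Φf e ≤ M := by rw [hM]; exact le_trans (le_max_right _ _) (le_max_right _ _)
      have hPD : 2*al*ae*(ve * φ + ve ^ 2 / (2 * ae) - vl ^ 2 / (2 * al))
          = 2*al*ae*ve*φ + al*ve^2 - ae*vl^2 := by field_simp
      have hMD' : 2*al*ae*ve*φ + al*ve^2 - ae*vl^2 ≤ 2*al*ae*M := by
        rw [← hPD]; exact mul_le_mul_of_nonneg_left hMD h2.le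
      have hMK' : (2*al*ae*ve*φ + al*ve^2 - ae*vl^2) + (ae-al)*(vl-al*e)^2 ≤ 2*al*ae*M := by
        rw [← hPKe]; exact mul_le_mul_of_nonneg_left hMK h2.le
      have hM0' : (0:ℝ) ≤ 2*al*ae*M := mul_nonneg h2.le hM0
      refine le_of_mul_le_mul_left ?_ h2
      obtain hreg := hcases ε hε0
      clear hcases hΦ hΦ0 hM hMD hMK hM0 hPD hPKe hc3 he_def hε
      rcases hreg with ⟨h1,h2',hv⟩|⟨h1,h2',hv⟩|⟨h1,h2',h3,hv⟩|⟨h1,h2',h3,hv⟩|⟨h1,h2',h3,hv⟩|⟨h1,h2',h3,hv⟩ <;> rw [hv] <;> clear hv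
      · -- A1
        rcases le_total (2*(ve-vl)+al*ε) 0 with hσ | hσ
        · linarith [mul_nonneg (mul_nonneg (mul_nonneg hal.le hae.le) hε0) (neg_nonneg.2 hσ), hM0']
        · have hQm : 2*al*ae*(ve-vl)*ε + al^2*ae*ε^2
              ≤ 2*al*ae*(ve-vl)*φ + al^2*ae*φ^2 := by
            linarith [mul_nonneg (mul_nonneg (mul_nonneg hal.le hae.le) (sub_nonneg.2 h1))
              (show (0:ℝ) ≤ 2*(ve-vl)+al*φ+al*ε by linarith [mul_nonneg hal.le hφ])]
          have hQφ : 2*al*ae*(ve-vl)*φ + al^2*ae*φ^2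
              ≤ (2*al*ae*ve*φ + al*ve^2 - ae*vl^2) + (ae-al)*(vl-al*e)^2 := by
            linarith [hRid φ, mul_nonneg (mul_nonneg (mul_nonneg hal.le hae.le) hA.le) (sq_nonneg (φ-e))]
          linarith
      · -- A2
        linarith [mul_nonneg (mul_nonneg (mul_nonneg hal.le hae.le) hve) (sub_nonneg.2 h1),
          mul_nonneg hal.le (sq_nonneg ve), hMD']
      · -- B1
        linarith [hRid ε, mul_nonneg (mul_nonneg (mul_nonneg hal.le hae.le) hA.le) (sq_nonneg (ε-e)), hMK']
      · -- B2
        have hu0 : (0:ℝ) ≤ vl - al*ε := by linarith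
        have hU : ae*vl - al*(ae*φ+ve) = (ae-al)*(vl-al*e) := by linear_combination al*hee
        have hu1 : ae*(vl-al*ε) ≤ (ae-al)*(vl-al*e) := by
          linarith [hU, mul_le_mul_of_nonneg_left h3 hal.le]
        have hw0 : (0:ℝ) ≤ vl - al*e := by linarith
        have hsq := mul_self_le_mul_self (mul_nonneg hae.le hu0) hu1
        have h5 : ae*(ae*(vl-al*ε)^2) ≤ ae*((ae-al)*(vl-al*e)^2) := by
          nlinarith [hsq, mul_nonneg (mul_nonneg hA.le hal.le) (sq_nonneg (vl-al*e))]
        have h6 : ae*(vl-al*ε)^2 ≤ (ae-al)*(vl-al*e)^2 := le_of_mul_le_mul_left h5 hae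
        linarith
      · -- B3
        linarith [mul_nonneg hal.le (sq_nonneg (ve - ae*(ε-φ))), hMD']
      · -- B4
        linarith
  · rw [if_neg hc]
    push_neg at hc
    constructor
    · -- membership
      rcases le_total (ve * φ + ve ^ 2 / (2 * ae) - vl ^ 2 / (2 * al)) 0 with hD0 | hD0
      · rw [max_eq_left hD0]
        exact ⟨0, Set.mem_setOf.2 (le_refl 0), hΦ0⟩
      · rw [max_eq_right hD0]
        have hT0 : (0:ℝ) ≤ φ + ve/ae := by positivity
        refine ⟨max (φ + ve/ae) (vl/al), le_trans hT0 (le_max_left _ _), ?_⟩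
        have hT1 : φ + ve/ae ≤ max (φ + ve/ae) (vl/al) := le_max_left _ _
        have hT2 : vl/al ≤ max (φ + ve/ae) (vl/al) := le_max_right _ _
        set T := max (φ + ve/ae) (vl/al) with hT
        clear_value T
        have hTal : vl ≤ al*T := by
          have h9 := (div_le_iff₀ hal).1 hT2; linarith
        have hTae : ve ≤ ae*(T-φ) := by
          have h9 : ve/ae ≤ T - φ := by linarith
          have h10 := (div_le_iff₀ hae).1 h9; linarith
        rcases le_or_gt T φ with hTφ | hTφ
        · have hve0 : ve = 0 := le_antisymm (by nlinarith) hve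
          rw [hΦ, if_pos hTφ, max_eq_right (by linarith), hve0]
          ring
        · rw [hΦ, if_neg (not_le.2 hTφ), max_eq_right (show ve - ae*(T-φ) ≤ 0 by linarith),
            max_eq_right (show vl - al*T ≤ 0 by linarith)]
          ring
    · -- upper bound
      intro x hx
      obtain ⟨ε, hε, rfl⟩ := hx
      have hε0 : (0:ℝ) ≤ ε := hε
      set M := max 0 (ve * φ + ve ^ 2 / (2 * ae) - vl ^ 2 / (2 * al)) with hM
      clear_value M
      have hM0 : (0:ℝ) ≤ M := by rw [hM]; exact le_max_left _ _
      have hMD : ve * φ + ve ^ 2 / (2 * ae) - vl ^ 2 / (2 * al) ≤ M := by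
        rw [hM]; exact le_max_right _ _
      have hPD : 2*al*ae*(ve * φ + ve ^ 2 / (2 * ae) - vl ^ 2 / (2 * al))
          = 2*al*ae*ve*φ + al*ve^2 - ae*vl^2 := by field_simp
      have hMD' : 2*al*ae*ve*φ + al*ve^2 - ae*vl^2 ≤ 2*al*ae*M := by
        rw [← hPD]; exact mul_le_mul_of_nonneg_left hMD h2.le
      have hM0' : (0:ℝ) ≤ 2*al*ae*M := mul_nonneg h2.le hM0
      have hkeyU : al < ae → (0 ≤ ve - vl + al*φ) → ae*vl - al*(ae*φ+ve) ≤ 0 := by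
        intro hcae hs
        have hA : (0:ℝ) < ae - al := by linarith
        have hce : φ ≤ (ve - vl + ae * φ) / (ae - al) := by
          rw [le_div_iff₀ hA]; nlinarith
        have hmin := hc hcae hce
        rcases le_total (φ + ve/ae) (vl/al) with hmm | hmm
        · rw [min_eq_left hmm] at hmin
          have h8 := mul_le_mul_of_nonneg_left hmin (by positivity : (0:ℝ) ≤ ae*(ae-al))
          have h9 : ae*(ae-al)*((ve - vl + ae * φ) / (ae - al)) = ae*(ve - vl + ae*φ) := by
            field_simp
          have h10 : ae*(ae-al)*(φ + ve/ae) = (ae-al)*(ae*φ + ve) := by field_simp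
          linarith [h8, h9.le, h9.ge, h10.le, h10.ge]
        · rw [min_eq_right hmm] at hmin
          have h8 := mul_le_mul_of_nonneg_left hmin (by positivity : (0:ℝ) ≤ al*(ae-al))
          have h9 : al*(ae-al)*((ve - vl + ae * φ) / (ae - al)) = al*(ve - vl + ae*φ) := by
            field_simp
          have h10 : al*(ae-al)*(vl/al) = (ae-al)*vl := by field_simp
          linarith [h8, h9.le, h9.ge, h10.le, h10.ge]
      refine le_of_mul_le_mul_left ?_ h2
      obtain hreg := hcases ε hε0
      clear hcases hΦ hΦ0 hM hMD hM0 hPD hc hε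
      rcases hreg with ⟨h1,h2',hv⟩|⟨h1,h2',hv⟩|⟨h1,h2',h3,hv⟩|⟨h1,h2',h3,hv⟩|⟨h1,h2',h3,hv⟩|⟨h1,h2',h3,hv⟩ <;> rw [hv] <;> clear hv
      · -- A1
        rcases le_total (2*(ve-vl)+al*ε) 0 with hσ | hσ
        · linarith [mul_nonneg (mul_nonneg (mul_nonneg hal.le hae.le) hε0) (neg_nonneg.2 hσ), hM0']
        · have hs : 0 ≤ ve - vl + al*φ := by
            linarith [mul_le_mul_of_nonneg_left h1 hal.le, mul_nonneg hal.le hε0]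
          have hQm : 2*al*ae*(ve-vl)*ε + al^2*ae*ε^2
              ≤ 2*al*ae*(ve-vl)*φ + al^2*ae*φ^2 := by
            linarith [mul_nonneg (mul_nonneg (mul_nonneg hal.le hae.le) (sub_nonneg.2 h1))
              (show (0:ℝ) ≤ 2*(ve-vl)+al*φ+al*ε by linarith [mul_nonneg hal.le hφ])]
          rcases le_total (al*φ) vl with hφl | hφl
          · have hkey2 : ae*(vl - al*φ) ≤ al*ve := by
              by_cases hcae : al < ae
              · have hU' := hkeyU hcae hs
                linarith
              · linarith [mul_le_mul_of_nonneg_left (show vl - al*φ ≤ ve by linarith) hae.le,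
                  mul_le_mul_of_nonneg_right (not_lt.1 hcae) hve]
            have hQφPD : 2*al*ae*(ve-vl)*φ + al^2*ae*φ^2
                ≤ 2*al*ae*ve*φ + al*ve^2 - ae*vl^2 := by
              linarith [mul_le_mul_of_nonneg_right hkey2 (show (0:ℝ) ≤ vl - al*φ by linarith),
                mul_le_mul_of_nonneg_left (show vl - al*φ ≤ ve by linarith) (mul_nonneg hal.le hve)]
            linarith [hMD']
          · have hV6 : 2*al*ae*(ve-vl)*ε + al^2*ae*ε^2 ≤ 2*ae*ve*vl - ae*vl^2 := by
              linarith [mul_nonneg (mul_nonneg hae.le (show (0:ℝ) ≤ vl - al*ε by linarith))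
                (show (0:ℝ) ≤ 2*ve - vl + al*ε by linarith)]
            have hQT : 2*ae*ve*vl - ae*vl^2 ≤ 2*al*ae*ve*φ + al*ve^2 - ae*vl^2 := by
              linarith [mul_nonneg (mul_nonneg hae.le hve) (show (0:ℝ) ≤ al*φ - vl by linarith),
                mul_nonneg hal.le (sq_nonneg ve)]
            linarith [hMD']
      · -- A2
        linarith [mul_nonneg (mul_nonneg (mul_nonneg hal.le hae.le) hve) (sub_nonneg.2 h1),
          mul_nonneg hal.le (sq_nonneg ve), hMD']
      · -- B1
        by_cases hcae : al < ae
        · rcases le_total (ve - vl + al*φ) 0 with hs | hs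
          · -- mode ii : Φ ≤ 0
            have hp : (0:ℝ) ≤ vl - al*φ - ve := by linarith
            have huv : (0:ℝ) ≤ (vl - al*ε) - (ve - ae*(ε-φ)) := by
              linarith [mul_nonneg (sub_nonneg.2 hcae.le) (sub_nonneg.2 h1)]
            linarith [hM0',
              mul_nonneg (mul_nonneg (mul_nonneg hal.le hae.le) hφ)
                (show (0:ℝ) ≤ vl - ve by linarith [mul_nonneg hal.le hφ]),
              mul_nonneg (mul_nonneg (mul_nonneg hal.le hae.le) hφ) hp,
              mul_nonneg (mul_nonneg (mul_nonneg hal.le hae.le) (sub_nonneg.2 h1)) hp,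
              mul_nonneg (mul_nonneg (mul_nonneg hal.le hae.le) (sub_nonneg.2 h1)) huv]
          · -- modes iii/iv : Φ ≤ D
            have hU' := hkeyU hcae hs
            have hu0 : (0:ℝ) ≤ vl - al*ε := by linarith
            have hvual : (0:ℝ) ≤ al*(ve - ae*(ε-φ)) - al*(vl - al*ε) := by
              linarith [mul_nonneg (sub_nonneg.2 hcae.le) hu0, hU']
            have h9 : 0 ≤ al*((2*al*ae*ve*φ + al*ve^2 - ae*vl^2)
                - ((2*al*ae*ve*φ + al*ve^2 - ae*vl^2) + ae*(vl-al*ε)^2 - al*(ve-ae*(ε-φ))^2)) := by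
              linarith [mul_nonneg (mul_nonneg hae.le hu0) hvual,
                mul_nonneg (mul_nonneg hae.le hu0) (neg_nonneg.2 hU'),
                sq_nonneg (ae*vl - al*(ae*φ+ve))]
            nlinarith [h9, hMD', hal]
        · -- mode i
          have hale : ae ≤ al := not_lt.1 hcae
          rcases le_total (ve - ae*(ε-φ)) (vl - al*ε) with hvu | hvu
          · -- v ≤ u : Φ ≤ 0
            have hp : (0:ℝ) ≤ vl - al*φ - ve := by
              linarith [mul_nonneg (sub_nonneg.2 hale) (sub_nonneg.2 h1)]
            linarith [hM0',
              mul_nonneg (mul_nonneg (mul_nonneg hal.le hae.le) hφ)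
                (show (0:ℝ) ≤ vl - ve by linarith [mul_nonneg hal.le hφ]),
              mul_nonneg (mul_nonneg (mul_nonneg hal.le hae.le) hφ) hp,
              mul_nonneg (mul_nonneg (mul_nonneg hal.le hae.le) (sub_nonneg.2 h1)) hp,
              mul_nonneg (mul_nonneg (mul_nonneg hal.le hae.le) (sub_nonneg.2 h1)) (sub_nonneg.2 hvu)]
          · -- u ≤ v : Φ ≤ D
            have hu0 : (0:ℝ) ≤ vl - al*ε := by linarith
            have hv0 : (0:ℝ) ≤ ve - ae*(ε-φ) := by linarith
            linarith [hMD',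
              mul_nonneg (mul_nonneg hae.le (sub_nonneg.2 hvu))
                (show (0:ℝ) ≤ (vl-al*ε) + (ve-ae*(ε-φ)) by linarith),
              mul_nonneg (sub_nonneg.2 hale) (sq_nonneg (ve-ae*(ε-φ)))]
      · -- B2
        have hu0 : (0:ℝ) ≤ vl - al*ε := by linarith
        have hu1 : ae*(vl-al*ε) ≤ ae*vl - al*(ae*φ+ve) := by
          linarith [mul_le_mul_of_nonneg_left h3 hal.le]
        have hUge : (0:ℝ) ≤ ae*vl - al*(ae*φ+ve) := le_trans (mul_nonneg hae.le hu0) hu1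
        have hfin : ae*(2*al*ae*ve*φ + al*ve^2 - ae*vl^2) + (ae*vl - al*(ae*φ+ve))^2 ≤ 0 →
            2*al*ae*ve*φ + al*ve^2 - ae*vl^2 + ae*(vl-al*ε)^2 ≤ 2*al*ae*M := by
          intro hX1
          have hsq := mul_self_le_mul_self (mul_nonneg hae.le hu0) hu1
          have h7 : ae*((2*al*ae*ve*φ + al*ve^2 - ae*vl^2) + ae*(vl-al*ε)^2) ≤ ae*0 := by
            linarith [hsq, hX1]
          have h8 := le_of_mul_le_mul_left h7 hae
          linarith [hM0']
        by_cases hcae : al < ae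
        · rcases le_total (ve - vl + al*φ) 0 with hs | hs
          · -- mode ii : C2 certificate with s ≤ 0
            refine hfin ?_
            linarith [mul_nonneg (mul_nonneg hal.le hve) hUge,
              mul_nonneg (mul_nonneg (mul_nonneg hal.le hae.le) hve)
                (show (0:ℝ) ≤ vl - ve - al*φ by linarith),
              mul_nonneg (mul_nonneg (mul_nonneg hal.le (mul_nonneg hae.le hae.le)) hφ)
                (show (0:ℝ) ≤ vl - ve - al*φ by linarith),
              sq_nonneg (al*ae*φ)]
          · -- modes iii/iv : U = 0, u = 0
            have hU' := hkeyU hcae hs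
            have hneg : ae*(vl - al*ε) ≤ 0 := le_trans hu1 hU'
            linarith [mul_nonneg hu0 (neg_nonneg.2 hneg), hMD']
        · -- mode i : C2 certificate with ae ≤ al
          have hale : ae ≤ al := not_lt.1 hcae
          refine hfin ?_
          have hH : (0:ℝ) ≤ ae*vl - ae*ae*φ - ae*ve := by
            linarith [mul_nonneg (sub_nonneg.2 hale) (mul_nonneg hae.le hφ),
              mul_nonneg (sub_nonneg.2 hale) hve]
          linarith [mul_nonneg (mul_nonneg hal.le (by positivity : (0:ℝ) ≤ ae*φ+ve)) hUge,
            mul_nonneg (mul_nonneg hal.le hve) hH,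
            mul_nonneg (mul_nonneg (mul_nonneg hal.le hae.le) hφ) hH,
            mul_nonneg (mul_nonneg hal.le hae.le) (sq_nonneg (ae*φ))]
      · -- B3
        linarith [mul_nonneg hal.le (sq_nonneg (ve - ae*(ε-φ))), hMD']
      · -- B4
        linarith

/-- Closed form for the minimum safety distance `sup_{ε ≥ 0} J(ε)`, obtained by
enumerating the candidate maximizers; moreover the supremum is attained. -/
theorem min_safety_distance_closed_form
    (vl ve al ae φ : ℝ)
    (hvl : 0 ≤ vl) (hve : 0 ≤ ve) (hal : 0 < al) (hae : 0 < ae) (hφ : 0 ≤ φ)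
    (vL vE J : ℝ → ℝ)
    (hvL : ∀ τ, vL τ = max (vl - al * τ) 0)
    (hvE : ∀ τ, vE τ = if τ < φ then ve else max (ve - ae * (τ - φ)) 0)
    (hJ : ∀ ε, J ε = ∫ τ in (0:ℝ)..ε, (vE τ - vL τ)) :
    IsGreatest (J '' {ε : ℝ | 0 ≤ ε})
      (if al < ae ∧ φ ≤ (ve - vl + ae * φ) / (ae - al) ∧
          (ve - vl + ae * φ) / (ae - al) < min (φ + ve / ae) (vl / al)
        then max 0 (max (ve * φ + ve ^ 2 / (2 * ae) - vl ^ 2 / (2 * al))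
              (J ((ve - vl + ae * φ) / (ae - al))))
        else max 0 (ve * φ + ve ^ 2 / (2 * ae) - vl ^ 2 / (2 * al))) := by
  exact Phi_isGreatest vl ve al ae φ hvl hve hal hae hφ J
    (J_eq_Phi vl ve al ae φ hvl hve hal hae hφ vL vE J hvL hvE hJ)
end

section
/- Let F, G, W, h, (u_k), and the disturbed trajectory x_{k+1} = F x_k + G u_k + h + W w_k and nominal trajectory x̄_{k+1} = F x̄_k + G u_k + h with x̄_0 = x_0 be as in the linear affine disturbance model. Let A be a real N_c × N_x matrix, B a real N_c × N_u matrix, and c ∈ ℝ^{N_c}. Fix k ≥ 0 and suppose the robustified constraint A x̄_k + B u_k + c + Σ_{i=0}^{k−1} |A F^{k−1−i} W|·𝟙 ≤ 0 holds componentwise, where |·| is the entrywise absolute value and 𝟙 is the all-ones vector. Then for every disturbance sequence with ‖w_i‖_∞ ≤ 1 for all 0 ≤ i ≤ k−1, the original constraint holds: A x_k + B u_k + c ≤ 0 componentwise. -/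
private lemma mulVec_sum_aux {m n ι : Type*} [Fintype n]
    (M : Matrix m n ℝ) (s : Finset ι) (v : ι → n → ℝ) :
    M.mulVec (∑ i ∈ s, v i) = ∑ i ∈ s, M.mulVec (v i) := by
  classical
  induction s using Finset.induction with
  | empty => simp
  | insert _ _ hnot ih => simp [Finset.sum_insert hnot, Matrix.mulVec_add, ih]

/-- If the robustified constraint
`A x̄_k + B u_k + c + Σ_{i=0}^{k−1} |A F^{k−1−i} W|·𝟙 ≤ 0` holds componentwise on the nominal
trajectory, then for every disturbance sequence with `‖w_i‖_∞ ≤ 1` (for `0 ≤ i ≤ k−1`) the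
original constraint `A x_k + B u_k + c ≤ 0` holds componentwise on the disturbed trajectory. -/
theorem robustified_constraint_implies_constraint
    (Nx Nu Nw Nc : ℕ)
    (F : Matrix (Fin Nx) (Fin Nx) ℝ) (G : Matrix (Fin Nx) (Fin Nu) ℝ)
    (W : Matrix (Fin Nx) (Fin Nw) ℝ) (h : Fin Nx → ℝ)
    (A : Matrix (Fin Nc) (Fin Nx) ℝ) (B : Matrix (Fin Nc) (Fin Nu) ℝ) (c : Fin Nc → ℝ)
    (u : ℕ → Fin Nu → ℝ) (xbar : ℕ → Fin Nx → ℝ)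
    (hxbar : ∀ m, xbar (m + 1) = F.mulVec (xbar m) + G.mulVec (u m) + h)
    (k : ℕ)
    (hrobust : ∀ j, A.mulVec (xbar k) j + B.mulVec (u k) j + c j +
        ∑ i ∈ Finset.range k, ∑ l, |(A * F ^ (k - 1 - i) * W) j l| ≤ 0) :
    ∀ (w : ℕ → Fin Nw → ℝ) (x : ℕ → Fin Nx → ℝ),
      (∀ i, i < k → ‖w i‖ ≤ 1) →
      x 0 = xbar 0 →
      (∀ m, x (m + 1) = F.mulVec (x m) + G.mulVec (u m) + h + W.mulVec (w m)) →
      ∀ j, A.mulVec (x k) j + B.mulVec (u k) j + c j ≤ 0 := by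
  intro w x hw hx0 hx j
  -- closed-form expression for x m
  have key : ∀ m : ℕ, x m = xbar m +
      ∑ i ∈ Finset.range m, (F ^ (m - 1 - i) * W).mulVec (w i) := by
    intro m
    induction m with
    | zero => simp [hx0]
    | succ n ih =>
      rw [hx, hxbar, ih]
      rw [Finset.sum_range_succ]
      have hpow : ∀ i ∈ Finset.range n,
          (F ^ (n + 1 - 1 - i) * W).mulVec (w i)
            = F.mulVec ((F ^ (n - 1 - i) * W).mulVec (w i)) := by
        intro i hi
        rw [Finset.mem_range] at hi
        have : n + 1 - 1 - i = (n - 1 - i) + 1 := by omega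
        rw [this, pow_succ', Matrix.mul_assoc, ← Matrix.mulVec_mulVec]
      rw [Finset.sum_congr rfl hpow]
      have hW : (F ^ (n + 1 - 1 - n) * W).mulVec (w n) = W.mulVec (w n) := by
        simp
      rw [hW, Matrix.mulVec_add, mulVec_sum_aux]
      abel
  have hterm : ∀ i ∈ Finset.range k,
      A.mulVec ((F ^ (k - 1 - i) * W).mulVec (w i)) j
        ≤ ∑ l, |(A * F ^ (k - 1 - i) * W) j l| := by
    intro i hi
    rw [Finset.mem_range] at hi
    rw [Matrix.mulVec_mulVec, ← Matrix.mul_assoc]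
    set M := A * F ^ (k - 1 - i) * W with hM
    have : M.mulVec (w i) j = ∑ l, M j l * w i l := rfl
    rw [this]
    refine le_trans (Finset.sum_le_sum fun l _ => le_abs_self _) ?_
    refine Finset.sum_le_sum fun l _ => ?_
    rw [abs_mul]
    have h1 : |w i l| ≤ 1 := by
      have := norm_le_pi_norm (w i) l
      simp only [Real.norm_eq_abs] at this
      exact this.trans (hw i hi)
    calc |M j l| * |w i l| ≤ |M j l| * 1 :=
          mul_le_mul_of_nonneg_left h1 (abs_nonneg _)
      _ = |M j l| := mul_one _
  have hsum : A.mulVec (x k) j = A.mulVec (xbar k) j +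
      ∑ i ∈ Finset.range k, A.mulVec ((F ^ (k - 1 - i) * W).mulVec (w i)) j := by
    rw [key k, Matrix.mulVec_add, mulVec_sum_aux]
    simp [Finset.sum_apply]
  have hfin : ∑ i ∈ Finset.range k, A.mulVec ((F ^ (k - 1 - i) * W).mulVec (w i)) j
      ≤ ∑ i ∈ Finset.range k, ∑ l, |(A * F ^ (k - 1 - i) * W) j l| :=
    Finset.sum_le_sum hterm
  have := hrobust j
  rw [hsum]
  linarith
end
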